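/- Let U, V be finite-dimensional F-vector spaces, L ≤ Lin(U,V) a subspace, and let W = L ⊕ V be regarded as a module over the set S = {μ_u : u ∈ U} where μ_u acts by μ_u(h, v) = (0, h(u)). Then for any (h, v) ∈ W with h ≠ 0, the S-submodule of W generated by (h, v) equals F·(h,v) + (0 ⊕ h(U)), and its dimension is 1 + rank(h). -/

import Mathlib

theorem stmt5 (F U V : Type*) [Field F] [AddCommGroup U] [Module F U]
    [AddCommGroup V] [Module F V] [FiniteDimensional F U] [FiniteDimensional F V]
    (L : Submodule F (U →ₗ[F] V))
    (μ : U → ((L × V) →ₗ[F] (L × V)))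
    (hμ : ∀ (u : U) (p : L × V), μ u p = (0, (p.1 : U →ₗ[F] V) u))
    (h : U →ₗ[F] V) (hL : h ∈ L) (hne : h ≠ 0) (v : V)
    (N : Submodule F (L × V))
    (hmem : ((⟨h, hL⟩, v) : L × V) ∈ N)
    (hinv : ∀ u : U, N.map (μ u) ≤ N)
    (hmin : ∀ N' : Submodule F (L × V),
        ((⟨h, hL⟩, v) : L × V) ∈ N' → (∀ u : U, N'.map (μ u) ≤ N') → N ≤ N') :
    N = Submodule.span F {((⟨h, hL⟩, v) : L × V)} ⊔
          Submodule.prod (⊥ : Submodule F L) (LinearMap.range h) ∧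
    Module.finrank F N = 1 + Module.finrank F (LinearMap.range h) := by
  set x : L × V := ((⟨h, hL⟩, v) : L × V) with hx
  set S := Submodule.span F {x} with hS
  set P := Submodule.prod (⊥ : Submodule F L) (LinearMap.range h) with hP
  have hxne : x ≠ 0 := by
    intro hc
    apply hne
    have := congrArg Prod.fst hc
    simpa [hx] using congrArg (Subtype.val) this
  -- M := S ⊔ P contains x
  have hxM : x ∈ S ⊔ P := Submodule.mem_sup_left (Submodule.mem_span_singleton_self x)
  -- invariance of S ⊔ P
  have hinvM : ∀ u : U, (S ⊔ P).map (μ u) ≤ S ⊔ P := by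
    intro u p hp
    rcases hp with ⟨q, hq, rfl⟩
    rw [hμ]
    rcases Submodule.mem_sup.mp hq with ⟨s, hs, t, ht, rfl⟩
    rcases Submodule.mem_span_singleton.mp hs with ⟨a, rfl⟩
    have ht1 : (t.1 : U →ₗ[F] V) = 0 := by
      have : t.1 ∈ (⊥ : Submodule F L) := ht.1
      simp only [Submodule.mem_bot] at this
      rw [this]; rfl
    have : ((a • x + t).1 : U →ₗ[F] V) u = h (a • u) := by
      simp [hx, ht1, map_smul]
    rw [this]
    exact Submodule.mem_sup_right ⟨Submodule.zero_mem _, ⟨a • u, rfl⟩⟩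
  -- P ≤ N
  have hPN : P ≤ N := by
    rintro ⟨a, w⟩ ⟨ha, hw⟩
    simp only [Submodule.mem_bot] at ha
    subst ha
    rcases hw with ⟨u, rfl⟩
    have : μ u x ∈ N := hinv u ⟨x, hmem, rfl⟩
    rwa [hμ] at this
  have hNM : N = S ⊔ P := by
    apply le_antisymm (hmin _ hxM hinvM)
    exact sup_le ((Submodule.span_singleton_le_iff_mem x N).mpr hmem) hPN
  refine ⟨hNM, ?_⟩
  -- disjointness
  have hdisj : S ⊓ P = ⊥ := by
    rw [eq_bot_iff]
    rintro p ⟨hp1, hp2⟩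
    rcases Submodule.mem_span_singleton.mp hp1 with ⟨a, rfl⟩
    have : (a • x).1 ∈ (⊥ : Submodule F L) := hp2.1
    simp only [Submodule.mem_bot] at this
    have ha : a • h = 0 := by
      have := congrArg Subtype.val this
      simpa [hx] using this
    have : a = 0 := by
      rcases smul_eq_zero.mp ha with h0 | h0
      · exact h0
      · exact absurd h0 hne
    simp [this]
  have hrank : Module.finrank F (S ⊔ P : Submodule F (L × V)) =
      Module.finrank F S + Module.finrank F P := by
    have := Submodule.finrank_sup_add_finrank_inf_eq S P
    rw [hdisj] at this
    simpa using this
  have hSr : Module.finrank F S = 1 := finrank_span_singleton hxne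
  have hPr : Module.finrank F P = Module.finrank F (LinearMap.range h) := by
    rw [hP, ← Submodule.map_inr]
    exact ((LinearMap.range h).equivMapOfInjective _ LinearMap.inr_injective).symm.finrank_eq
  rw [hNM, hrank, hSr, hPr]
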